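/- The function h = log ∘ v, where v(P) = log(exp(P) + 1), is strictly concave on ℝ; equivalently, its second derivative h''(P) = (e^P / (e^P+1)^2) · (1/log(e^P+1)) · (1 - e^P/log(e^P+1)) is strictly negative for all P ∈ ℝ. -/

import Mathlib

noncomputable def v (P : ℝ) : ℝ := Real.log (Real.exp P + 1)

noncomputable def h : ℝ → ℝ := Real.log ∘ v

lemma upos (P : ℝ) : (0:ℝ) < Real.exp P + 1 := by positivity

lemma Lpos (P : ℝ) : 0 < Real.log (Real.exp P + 1) :=
  Real.log_pos (by linarith [Real.exp_pos P])

lemma hasDerivAt_v (P : ℝ) :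
    HasDerivAt v (Real.exp P / (Real.exp P + 1)) P := by
  exact ((Real.hasDerivAt_exp P).add_const 1).log (upos P).ne'

lemma hasDerivAt_h (P : ℝ) :
    HasDerivAt h (Real.exp P / ((Real.exp P + 1) * Real.log (Real.exp P + 1))) P := by
  have := (hasDerivAt_v P).log (Lpos P).ne'
  simpa [h, Function.comp_def, div_div, v] using this

lemma deriv_h : deriv h = fun P =>
    Real.exp P / ((Real.exp P + 1) * Real.log (Real.exp P + 1)) := by
  funext P; exact (hasDerivAt_h P).deriv

lemma hasDerivAt_deriv_h (P : ℝ) :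
    HasDerivAt (deriv h)
      ((Real.exp P / (Real.exp P + 1) ^ 2) * (1 / Real.log (Real.exp P + 1)) *
        (1 - Real.exp P / Real.log (Real.exp P + 1))) P := by
  rw [deriv_h]
  set L := Real.log (Real.exp P + 1) with hL
  have hD : HasDerivAt (fun P => (Real.exp P + 1) * Real.log (Real.exp P + 1))
      (Real.exp P * L + (Real.exp P + 1) * (Real.exp P / (Real.exp P + 1))) P :=
    ((Real.hasDerivAt_exp P).add_const 1).mul (hasDerivAt_v P)
  have hDne : (Real.exp P + 1) * L ≠ 0 := mul_ne_zero (upos P).ne' (Lpos P).ne'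
  have := (Real.hasDerivAt_exp P).div hD hDne
  refine this.congr_deriv ?_
  have h1 : (Real.exp P + 1) ≠ 0 := (upos P).ne'
  have h2 : L ≠ 0 := (Lpos P).ne'
  rw [← hL]
  field_simp
  ring

lemma deriv2_h (P : ℝ) : deriv (deriv h) P =
      (Real.exp P / (Real.exp P + 1) ^ 2) * (1 / Real.log (Real.exp P + 1)) *
        (1 - Real.exp P / Real.log (Real.exp P + 1)) :=
  (hasDerivAt_deriv_h P).deriv

lemma deriv2_neg (P : ℝ) :
    (Real.exp P / (Real.exp P + 1) ^ 2) * (1 / Real.log (Real.exp P + 1)) *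
        (1 - Real.exp P / Real.log (Real.exp P + 1)) < 0 := by
  have hL := Lpos P
  have hlt : Real.log (Real.exp P + 1) < Real.exp P := by
    have := Real.add_one_le_exp (Real.log (Real.exp P + 1))
    have := Real.log_lt_sub_one_of_pos (x := Real.exp P + 1) (by positivity)
      (by simp [Real.exp_pos P, (Real.exp_pos P).ne'])
    linarith
  have h3 : 1 - Real.exp P / Real.log (Real.exp P + 1) < 0 := by
    rw [sub_neg, lt_div_iff₀ hL]; linarith
  have h1 : 0 < Real.exp P / (Real.exp P + 1) ^ 2 := by positivity
  have h2 : 0 < 1 / Real.log (Real.exp P + 1) := by positivity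
  exact mul_neg_of_pos_of_neg (mul_pos h1 h2) h3

theorem log_comp_v_strictConcave :
    StrictConcaveOn ℝ Set.univ h ∧
    ∀ P : ℝ,
      (Real.exp P / (Real.exp P + 1) ^ 2) * (1 / Real.log (Real.exp P + 1)) *
        (1 - Real.exp P / Real.log (Real.exp P + 1)) < 0 ∧
      deriv (deriv h) P =
        (Real.exp P / (Real.exp P + 1) ^ 2) * (1 / Real.log (Real.exp P + 1)) *
          (1 - Real.exp P / Real.log (Real.exp P + 1)) := by
  constructor
  · apply strictConcaveOn_of_deriv2_neg convex_univ
    · exact fun x _ => ((hasDerivAt_h x).continuousAt).continuousWithinAt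
    · intro x _
      simp only [Function.iterate_succ, Function.iterate_zero, Function.comp, id]
      rw [deriv2_h x]
      exact deriv2_neg x
  · exact fun P => ⟨deriv2_neg P, deriv2_h P⟩
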